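/- Let F : ℝⁿ → ℝⁿ be continuous and monotone (i.e., (x−y)ᵀ(F(x)−F(y)) ≥ 0 for all x, y). Suppose there exists y ∈ ℝⁿ with F(y) > 0 componentwise, and there exist constants c, M > 0 such that for all x with ‖x‖₁ ≥ M one has ‖F(x)‖ ≤ c‖x‖₁, where c < (min_i F_i(y))/‖y‖. Then for any ε > 0 the set Z_ε = {x : x ≥ 0, F(x) ≥ 0, xᵀF(x) ≤ ε} is compact. -/

import Mathlib

open Finset

lemma norm_le_sum_abs {n : ℕ} (x : EuclideanSpace ℝ (Fin n)) : ‖x‖ ≤ ∑ i, |x i| := by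
  rw [EuclideanSpace.norm_eq]
  rw [show ∑ i, |x i| = Real.sqrt ((∑ i, |x i|)^2) from
    (Real.sqrt_sq (Finset.sum_nonneg fun i _ => abs_nonneg _)).symm]
  apply Real.sqrt_le_sqrt
  simp only [Real.norm_eq_abs]
  exact Finset.sum_sq_le_sq_sum_of_nonneg (fun i _ => abs_nonneg _)

/-- Compactness of the set `Z_ε` for continuous monotone `F` satisfying a strict feasibility
condition and a sublinear growth condition. -/
theorem stmt_3 {n : ℕ} (F : EuclideanSpace ℝ (Fin n) → EuclideanSpace ℝ (Fin n))
    (hcont : Continuous F)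
    (hmono : ∀ x y : EuclideanSpace ℝ (Fin n), 0 ≤ ∑ i, (x i - y i) * (F x i - F y i))
    (y : EuclideanSpace ℝ (Fin n)) (hy : ∀ i, 0 < F y i)
    (c M : ℝ) (hc : 0 < c) (hM : 0 < M)
    (hgrow : ∀ x : EuclideanSpace ℝ (Fin n), M ≤ ∑ i, |x i| → ‖F x‖ ≤ c * ∑ i, |x i|)
    (hcsmall : c < (⨅ i, F y i) / ‖y‖)
    (ε : ℝ) (hε : 0 < ε) :
    IsCompact {x : EuclideanSpace ℝ (Fin n) |
      (∀ i, 0 ≤ x i) ∧ (∀ i, 0 ≤ F x i) ∧ ∑ i, x i * F x i ≤ ε} := by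
  set S := {x : EuclideanSpace ℝ (Fin n) |
      (∀ i, 0 ≤ x i) ∧ (∀ i, 0 ≤ F x i) ∧ ∑ i, x i * F x i ≤ ε}
  -- degenerate case ‖y‖ = 0
  rcases eq_or_lt_of_le (norm_nonneg y) with hy0 | hy0
  · exfalso
    rw [← hy0, div_zero] at hcsmall
    exact absurd (hc.trans hcsmall) (lt_irrefl 0)
  -- ‖y‖ > 0
  set m : ℝ := ⨅ i, F y i with hm
  have hyne : y ≠ 0 := fun h => by simp [h] at hy0
  have hne : Nonempty (Fin n) := by
    by_contra h
    exact hyne (PiLp.ext fun i => absurd ⟨i⟩ h)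
  have hmle : ∀ i, m ≤ F y i := fun i =>
    ciInf_le (Set.Finite.bddBelow (Set.finite_range _)) i
  have hcm : c * ‖y‖ < m := (lt_div_iff₀ hy0).mp hcsmall
  have hm0 : 0 < m := lt_trans (mul_pos hc hy0) hcm
  set C : ℝ := ∑ i, y i * F y i with hC
  set B : ℝ := (ε + C + c * ‖y‖ * M) / (m - c * ‖y‖) with hB
  -- key bound
  have hbound : ∀ x ∈ S, ‖x‖ ≤ max M B := by
    intro x hx
    obtain ⟨hx1, hx2, hx3⟩ := hx
    have habs : ∀ i, |x i| = x i := fun i => abs_of_nonneg (hx1 i)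
    have hnle : ‖x‖ ≤ ∑ i, x i := by
      simpa [habs] using norm_le_sum_abs x
    set t : ℝ := ∑ i, x i with ht
    have ht0 : 0 ≤ t := Finset.sum_nonneg fun i _ => hx1 i
    rcases le_or_gt t M with h | h
    · exact le_trans hnle (le_max_of_le_left h)
    · -- growth applies
      have hgr : ‖F x‖ ≤ c * t := by
        have := hgrow x (by simpa [habs] using h.le)
        simpa [habs] using this
      -- monotonicity expansion
      have hexp : ∑ i, x i * F y i + ∑ i, y i * F x i ≤ ∑ i, x i * F x i + C := by
        have h0 := hmono x y
        have : (0:ℝ) ≤ ∑ i, (x i * F x i - x i * F y i - y i * F x i + y i * F y i) := by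
          convert h0 using 2 with i
          ring
        rw [Finset.sum_add_distrib, Finset.sum_sub_distrib, Finset.sum_sub_distrib] at this
        linarith
      have h1 : m * t ≤ ∑ i, x i * F y i := by
        rw [ht, Finset.mul_sum]
        exact Finset.sum_le_sum fun i _ => by
          rw [mul_comm]
          exact mul_le_mul_of_nonneg_left (hmle i) (hx1 i)
      have h2 : -(c * ‖y‖ * t) ≤ ∑ i, y i * F x i := by
        have hin : |(inner ℝ y (F x) : ℝ)| ≤ ‖y‖ * ‖F x‖ := abs_real_inner_le_norm y (F x)
        have heq : (inner ℝ y (F x) : ℝ) = ∑ i, y i * F x i := by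
          simp [PiLp.inner_apply, mul_comm]
        have : ‖y‖ * ‖F x‖ ≤ ‖y‖ * (c * t) :=
          mul_le_mul_of_nonneg_left hgr (norm_nonneg y)
        nlinarith [neg_abs_le (inner ℝ y (F x) : ℝ)]
      have hkey : (m - c * ‖y‖) * t ≤ ε + C := by nlinarith
      have htB : t ≤ B := by
        rw [hB]
        rw [le_div_iff₀ (by linarith)]
        have hcyM : 0 ≤ c * ‖y‖ * M := by positivity
        nlinarith
      exact le_trans hnle (le_max_of_le_right htB)
  -- closedness
  have hclosed : IsClosed S := by
    have e1 : IsClosed {x : EuclideanSpace ℝ (Fin n) | ∀ i, 0 ≤ x i} := by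
      rw [Set.setOf_forall]
      exact isClosed_iInter fun i =>
        isClosed_le continuous_const (EuclideanSpace.proj i).continuous
    have e2 : IsClosed {x : EuclideanSpace ℝ (Fin n) | ∀ i, 0 ≤ F x i} := by
      rw [Set.setOf_forall]
      exact isClosed_iInter fun i =>
        isClosed_le continuous_const ((EuclideanSpace.proj i).continuous.comp hcont)
    have e3 : IsClosed {x : EuclideanSpace ℝ (Fin n) | ∑ i, x i * F x i ≤ ε} := by
      apply isClosed_le _ continuous_const
      exact continuous_finset_sum _ fun i _ =>
        ((EuclideanSpace.proj i).continuous).mul ((EuclideanSpace.proj i).continuous.comp hcont)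
    exact (e1.inter (e2.inter e3))
  exact Metric.isCompact_of_isClosed_isBounded hclosed
    ((Metric.isBounded_closedBall (x := (0 : EuclideanSpace ℝ (Fin n))) (r := max M B)).subset
      fun x hx => mem_closedBall_zero_iff.mpr (hbound x hx))
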